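/- Let r := (s₁ ∘ s₂)² ∈ W. Then r has order 3, r maps the root lattice L = {(a,b) ∈ ℤ² : a + b is even} into itself, and for every group homomorphism f from the additive group L to the multiplicative group ℂˣ satisfying f(r·x) = f(x) for all x ∈ L, one has f(γ) = 1 for every long root γ ∈ Φ (i.e. every γ ∈ Φ with B(γ,γ) = 12). (This is the key step excluding elliptic endoscopic tori of G₂ attached to the order-3 rotation in the Weyl group.) -/

import Mathlib

noncomputable section

/-- The bilinear form `B((x₁,x₂),(y₁,y₂)) = x₁y₁ + 3x₂y₂` on `ℝ²`. -/
def B (x y : ℝ × ℝ) : ℝ := x.1 * y.1 + 3 * x.2 * y.2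

/-- The short simple root of `G₂`. -/
def α₁ : ℝ × ℝ := (-1, 1)
/-- The long simple root of `G₂`. -/
def α₂ : ℝ × ℝ := (3, -1)

/-- The `B`-orthogonal reflection in `α`, as a linear map. -/
def reflLM (α : ℝ × ℝ) : (ℝ × ℝ) →ₗ[ℝ] (ℝ × ℝ) where
  toFun x := x - (2 * B x α / B α α) • α
  map_add' x y := by
    simp only [B, Prod.fst_add, Prod.snd_add, Prod.smul_mk, smul_eq_mul, Prod.mk_add_mk,
      Prod.ext_iff, Prod.fst_sub, Prod.snd_sub, Prod.smul_fst, Prod.smul_snd]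
    constructor <;> ring
  map_smul' c x := by
    simp only [B, Prod.smul_fst, Prod.smul_snd, smul_eq_mul, RingHom.id_apply,
      Prod.ext_iff, Prod.fst_sub, Prod.snd_sub]
    constructor <;> ring

/-- The `B`-orthogonal reflection in `α`, as a linear automorphism, given that the
reflection is involutive. -/
def reflLE (α : ℝ × ℝ) (h : (reflLM α).comp (reflLM α) = LinearMap.id) :
    (ℝ × ℝ) ≃ₗ[ℝ] (ℝ × ℝ) :=
  LinearEquiv.ofLinear (reflLM α) (reflLM α) h h

lemma invol₁ : (reflLM α₁).comp (reflLM α₁) = LinearMap.id := by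
  apply LinearMap.ext
  intro x
  simp only [LinearMap.comp_apply, LinearMap.id_apply, reflLM, LinearMap.coe_mk, AddHom.coe_mk,
    B, α₁, Prod.ext_iff, Prod.fst_sub, Prod.snd_sub, Prod.smul_fst, Prod.smul_snd, smul_eq_mul]
  norm_num
  constructor <;> ring

lemma invol₂ : (reflLM α₂).comp (reflLM α₂) = LinearMap.id := by
  apply LinearMap.ext
  intro x
  simp only [LinearMap.comp_apply, LinearMap.id_apply, reflLM, LinearMap.coe_mk, AddHom.coe_mk,
    B, α₂, Prod.ext_iff, Prod.fst_sub, Prod.snd_sub, Prod.smul_fst, Prod.smul_snd, smul_eq_mul]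
  norm_num
  constructor <;> ring

/-- The simple reflection `s₁ = s_{α₁}`. -/
def s₁ : (ℝ × ℝ) ≃ₗ[ℝ] (ℝ × ℝ) := reflLE α₁ invol₁

/-- The simple reflection `s₂ = s_{α₂}`. -/
def s₂ : (ℝ × ℝ) ≃ₗ[ℝ] (ℝ × ℝ) := reflLE α₂ invol₂

/-- The Weyl group of `G₂`, as the subgroup of linear automorphisms of `ℝ²`
generated by `s₁` and `s₂`. -/
def W : Subgroup ((ℝ × ℝ) ≃ₗ[ℝ] (ℝ × ℝ)) := Subgroup.closure {s₁, s₂}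

/-- The set of roots of `G₂`. -/
def Φ : Set (ℝ × ℝ) :=
  {(2,0), (-2,0), (1,1), (1,-1), (-1,1), (-1,-1),
   (0,2), (0,-2), (3,1), (3,-1), (-3,1), (-3,-1)}

/-- The root lattice `L = {(a,b) ∈ ℤ² : a + b even}` of `G₂`, as an additive
subgroup of `ℝ²`. -/
def L : AddSubgroup (ℝ × ℝ) where
  carrier := {x | ∃ a b : ℤ, x = ((a : ℝ), (b : ℝ)) ∧ Even (a + b)}
  zero_mem' := ⟨0, 0, by ext <;> simp, by decide⟩
  add_mem' := by
    rintro x y ⟨a, b, rfl, hab⟩ ⟨c, d, rfl, hcd⟩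
    exact ⟨a + c, b + d, by push_cast; rw [Prod.mk_add_mk],
      by rw [show a + c + (b + d) = (a + b) + (c + d) by ring]; exact hab.add hcd⟩
  neg_mem' := by
    rintro x ⟨a, b, rfl, hab⟩
    exact ⟨-a, -b, by push_cast; rfl,
      by rw [show -a + -b = -(a + b) by ring]; exact hab.neg⟩

/-- The order-3 rotation `r = (s₁ s₂)²` in the Weyl group of `G₂`. -/
def r : (ℝ × ℝ) ≃ₗ[ℝ] (ℝ × ℝ) := (s₁ * s₂) ^ 2

lemma mulApply (e e' : (ℝ×ℝ) ≃ₗ[ℝ] (ℝ×ℝ)) (x : ℝ×ℝ) : (e * e') x = e (e' x) := rfl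

lemma oneApply (x : ℝ×ℝ) : (1 : (ℝ×ℝ) ≃ₗ[ℝ] (ℝ×ℝ)) x = x := rfl

lemma r_apply (x : ℝ × ℝ) : r x = ((-x.1+3*x.2)/2, (-x.1-x.2)/2) := by
  simp only [r, pow_two, mulApply, s₁, s₂, reflLE, LinearEquiv.ofLinear_apply,
    reflLM, LinearMap.coe_mk, AddHom.coe_mk, B, α₁, α₂, Prod.fst_sub, Prod.snd_sub,
    Prod.smul_fst, Prod.smul_snd, smul_eq_mul, Prod.ext_iff]
  norm_num
  constructor <;> ring

lemma r_cube : r ^ 3 = 1 := by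
  apply LinearEquiv.ext
  intro x
  have h3 : (r ^ 3) x = r (r (r x)) := rfl
  rw [h3, r_apply, r_apply, r_apply, oneApply]
  cases x with
  | mk a b => simp only [Prod.ext_iff]; constructor <;> ring

lemma r_mem_L {x : ℝ × ℝ} (hx : x ∈ L) : r x ∈ L := by
  obtain ⟨a, b, rfl, k, hk⟩ := hx
  refine ⟨-k + 2*b, -k, ?_, ⟨b - k, by ring⟩⟩
  rw [r_apply]
  have hk' : (a : ℝ) + b = 2 * k := by exact_mod_cast by push_cast [hk]; ring
  simp only [Prod.ext_iff]
  push_cast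
  constructor <;> linarith

/-- The element `r = (s₁s₂)²` has order 3, preserves the root lattice `L`, and any
homomorphism `L → ℂˣ` invariant under `r` is trivial on all long roots of `G₂`:
the key step excluding elliptic endoscopic tori of `G₂` attached to the order-3
rotation in the Weyl group. -/
theorem stmt15 :
    orderOf r = 3 ∧
    (∀ x : ℝ × ℝ, x ∈ L → r x ∈ L) ∧
    ∀ f : L → ℂˣ, (∀ x y : L, f (x + y) = f x * f y) →
      (∀ (x : L) (hx : r (x : ℝ × ℝ) ∈ L), f ⟨r (x : ℝ × ℝ), hx⟩ = f x) →
      ∀ γ : L, (γ : ℝ × ℝ) ∈ Φ → B (γ : ℝ × ℝ) (γ : ℝ × ℝ) = 12 → f γ = 1 := by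
  refine ⟨?_, fun x hx => r_mem_L hx, ?_⟩
  · have : Fact (Nat.Prime 3) := ⟨by norm_num⟩
    refine orderOf_eq_prime r_cube ?_
    intro h
    have h2 := congrArg (fun (e : (ℝ×ℝ) ≃ₗ[ℝ] (ℝ×ℝ)) => e (2, 0)) h
    simp only [r_apply, oneApply] at h2
    rw [Prod.ext_iff] at h2
    norm_num at h2
  · intro f hadd hinv γ hΦ hlong
    have f0 : f 0 = 1 := by
      have h := hadd 0 0
      rw [add_zero] at h
      exact (right_eq_mul.mp h)
    obtain ⟨a, b, hab, heven⟩ := γ.2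
    have hγval : (γ : ℝ × ℝ) = ((a:ℝ), (b:ℝ)) := hab
    have solve : ∀ (dx dy : ℤ), Even (dx + dy) →
        (γ : ℝ × ℝ) = ((dx:ℝ), (dy:ℝ)) - r ((dx:ℝ), (dy:ℝ)) → f γ = 1 := by
      intro dx dy hd heq
      have hδ : ((dx:ℝ), (dy:ℝ)) ∈ L := ⟨dx, dy, rfl, hd⟩
      have hr := r_mem_L hδ
      set δL : L := ⟨((dx:ℝ), (dy:ℝ)), hδ⟩ with hδL
      set ε : L := ⟨r ((dx:ℝ), (dy:ℝ)), hr⟩ with hε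
      have hsum : δL = γ + ε := by
        apply Subtype.ext
        rw [AddSubgroup.coe_add, heq]
        abel
      have h1 : f δL = f γ * f ε := by rw [hsum]; exact hadd γ ε
      have h2 : f ε = f δL := hinv δL hr
      rw [h2] at h1
      exact (right_eq_mul.mp h1)
    rw [hγval] at hΦ hlong
    simp only [Φ, Set.mem_insert_iff, Set.mem_singleton_iff, Prod.mk.injEq] at hΦ
    rcases hΦ with h|h|h|h|h|h|h|h|h|h|h|h
    · rw [h.1, h.2] at hlong; norm_num [B] at hlong
    · rw [h.1, h.2] at hlong; norm_num [B] at hlong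
    · rw [h.1, h.2] at hlong; norm_num [B] at hlong
    · rw [h.1, h.2] at hlong; norm_num [B] at hlong
    · rw [h.1, h.2] at hlong; norm_num [B] at hlong
    · rw [h.1, h.2] at hlong; norm_num [B] at hlong
    · exact solve 1 1 ⟨1, by ring⟩ (by rw [hγval, h.1, h.2, r_apply, Prod.mk_sub_mk, Prod.mk.injEq]; norm_num)
    · exact solve (-1) (-1) ⟨-1, by ring⟩ (by rw [hγval, h.1, h.2, r_apply, Prod.mk_sub_mk, Prod.mk.injEq]; norm_num)
    · exact solve 2 0 ⟨1, by ring⟩ (by rw [hγval, h.1, h.2, r_apply, Prod.mk_sub_mk, Prod.mk.injEq]; norm_num)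
    · exact solve 1 (-1) ⟨0, by ring⟩ (by rw [hγval, h.1, h.2, r_apply, Prod.mk_sub_mk, Prod.mk.injEq]; norm_num)
    · exact solve (-1) 1 ⟨0, by ring⟩ (by rw [hγval, h.1, h.2, r_apply, Prod.mk_sub_mk, Prod.mk.injEq]; norm_num)
    · exact solve (-2) 0 ⟨-1, by ring⟩ (by rw [hγval, h.1, h.2, r_apply, Prod.mk_sub_mk, Prod.mk.injEq]; norm_num)
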